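/- Let m ≥ 2 and let M_m denote the maximal cardinality of an orbit of the action of the automorphism group 𝒯_m of the binary rooted tree of height m on {0,1}^(leaves), i.e., on binary labellings of the 2^m leaves, by permuting leaves. Then M_{m+1} ≤ 2·M_m², M₂ = 4, and hence M_m ≤ 2^(3·2^(m−2) − 1) for all m ≥ 2. -/

import Mathlib

/-- Binary labellings of the leaves of the complete rooted binary tree of height m:
a labelling of the height-(m+1) tree is an ordered pair of labellings of height-m trees. -/
def Lab : ℕ → Type
  | 0 => Bool
  | m + 1 => Lab m × Lab m

instance instFintypeLab : (m : ℕ) → Fintype (Lab m)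
  | 0 => inferInstanceAs (Fintype Bool)
  | m + 1 => letI := instFintypeLab m; inferInstanceAs (Fintype (Lab m × Lab m))

/-- Orbit equivalence of leaf labellings under the automorphism group 𝒯_m of the binary
tree of height m: an automorphism acts on a pair of subtrees by acting on each subtree
and possibly swapping them. -/
def treeEquiv : (m : ℕ) → Lab m → Lab m → Prop
  | 0, a, b => a = b
  | m + 1, a, b =>
      (treeEquiv m a.1 b.1 ∧ treeEquiv m a.2 b.2) ∨
      (treeEquiv m a.1 b.2 ∧ treeEquiv m a.2 b.1)

/-- M_m: the maximal cardinality of an orbit of 𝒯_m on binary leaf labellings. -/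
noncomputable def maxOrbit (m : ℕ) : ℕ :=
  Finset.sup Finset.univ fun w : Lab m => Nat.card {w' : Lab m // treeEquiv m w w'}

instance instDecEqLab : (m : ℕ) → DecidableEq (Lab m)
  | 0 => inferInstanceAs (DecidableEq Bool)
  | m + 1 => letI := instDecEqLab m; inferInstanceAs (DecidableEq (Lab m × Lab m))

instance instDecTE : (m : ℕ) → DecidableRel (treeEquiv m)
  | 0, a, b => inferInstanceAs (Decidable (a = b))
  | m + 1, a, b =>
      letI := instDecTE m
      inferInstanceAs (Decidable ((treeEquiv m a.1 b.1 ∧ treeEquiv m a.2 b.2) ∨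
        (treeEquiv m a.1 b.2 ∧ treeEquiv m a.2 b.1)))

lemma natCard_eq (m : ℕ) (w : Lab m) :
    Nat.card {w' : Lab m // treeEquiv m w w'} =
      (Finset.univ.filter (fun w' => treeEquiv m w w')).card := by
  rw [Nat.card_eq_fintype_card, Fintype.card_subtype]

lemma maxOrbit_eq (m : ℕ) :
    maxOrbit m = Finset.sup Finset.univ
      (fun w : Lab m => (Finset.univ.filter (fun w' => treeEquiv m w w')).card) := by
  unfold maxOrbit
  exact Finset.sup_congr rfl (fun w _ => natCard_eq m w)

lemma filter_card_le (m : ℕ) (w : Lab m) :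
    (Finset.univ.filter (fun w' => treeEquiv m w w')).card ≤ maxOrbit m := by
  rw [maxOrbit_eq]
  exact Finset.le_sup (f := fun w : Lab m =>
    (Finset.univ.filter (fun w' => treeEquiv m w w')).card) (Finset.mem_univ w)

lemma maxOrbit_two : maxOrbit 2 = 4 := by
  rw [maxOrbit_eq]
  decide

lemma maxOrbit_step (m : ℕ) : maxOrbit (m + 1) ≤ 2 * (maxOrbit m) ^ 2 := by
  rw [maxOrbit_eq]
  apply Finset.sup_le
  intro w _
  letI : ∀ p : Lab m × Lab m, DecidablePred (fun w' : Lab m × Lab m => treeEquiv (m + 1) p w') :=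
    fun p w' => instDecTE (m + 1) p w'
  suffices h : ∀ p : Lab m × Lab m,
      (Finset.univ.filter (fun w' : Lab m × Lab m => treeEquiv (m + 1) p w')).card ≤
        2 * (maxOrbit m) ^ 2 from h w
  rintro ⟨a, b⟩
  set A : Finset (Lab m) := Finset.univ.filter (fun w' => treeEquiv m a w') with hA
  set B : Finset (Lab m) := Finset.univ.filter (fun w' => treeEquiv m b w') with hB
  have hsub : (Finset.univ.filter (fun w' : Lab m × Lab m => treeEquiv (m + 1) (a, b) w'))
      ⊆ (A ×ˢ B ∪ B ×ˢ A : Finset (Lab m × Lab m)) := by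
    intro x hx
    rw [Finset.mem_filter] at hx
    simp only [treeEquiv] at hx
    rcases hx.2 with ⟨h1, h2⟩ | ⟨h1, h2⟩
    · exact Finset.mem_union_left _ (Finset.mem_product.2
        ⟨Finset.mem_filter.2 ⟨Finset.mem_univ _, h1⟩,
         Finset.mem_filter.2 ⟨Finset.mem_univ _, h2⟩⟩)
    · exact Finset.mem_union_right _ (Finset.mem_product.2
        ⟨Finset.mem_filter.2 ⟨Finset.mem_univ _, h2⟩,
         Finset.mem_filter.2 ⟨Finset.mem_univ _, h1⟩⟩)
  calc (Finset.univ.filter (fun w' : Lab m × Lab m => treeEquiv (m + 1) (a, b) w')).card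
      ≤ (A ×ˢ B ∪ B ×ˢ A : Finset (Lab m × Lab m)).card := Finset.card_le_card hsub
    _ ≤ (A ×ˢ B).card + (B ×ˢ A).card := Finset.card_union_le _ _
    _ = A.card * B.card + B.card * A.card := by rw [Finset.card_product, Finset.card_product]
    _ ≤ maxOrbit m * maxOrbit m + maxOrbit m * maxOrbit m := by
        have ha := filter_card_le m a
        have hb := filter_card_le m b
        rw [← hA] at ha
        rw [← hB] at hb
        exact Nat.add_le_add (Nat.mul_le_mul ha hb) (Nat.mul_le_mul hb ha)
    _ = 2 * (maxOrbit m) ^ 2 := by ring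

/-- M_{m+1} ≤ 2·M_m² for m ≥ 2, M₂ = 4, and hence
M_m ≤ 2^(3·2^(m−2) − 1) for all m ≥ 2. -/
theorem maxOrbit_bound :
    (∀ m : ℕ, 2 ≤ m → maxOrbit (m + 1) ≤ 2 * (maxOrbit m) ^ 2) ∧
      maxOrbit 2 = 4 ∧
      ∀ m : ℕ, 2 ≤ m → maxOrbit m ≤ 2 ^ (3 * 2 ^ (m - 2) - 1) := by
  refine ⟨fun m _ => maxOrbit_step m, maxOrbit_two, ?_⟩
  intro m hm
  induction m, hm using Nat.le_induction with
  | base => rw [maxOrbit_two]; norm_num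
  | succ m hm ih =>
    have h1 : maxOrbit (m + 1) ≤ 2 * (maxOrbit m) ^ 2 := maxOrbit_step m
    have h2 : 2 * (maxOrbit m) ^ 2 ≤ 2 * (2 ^ (3 * 2 ^ (m - 2) - 1)) ^ 2 :=
      Nat.mul_le_mul_left _ (Nat.pow_le_pow_left ih 2)
    have hexp : 2 * (2 ^ (3 * 2 ^ (m - 2) - 1)) ^ 2 = 2 ^ (3 * 2 ^ (m + 1 - 2) - 1) := by
      rw [← pow_mul, ← pow_succ']
      congr 1
      have h3 : m + 1 - 2 = (m - 2) + 1 := by omega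
      have h4 : (1 : ℕ) ≤ 2 ^ (m - 2) := Nat.one_le_two_pow
      rw [h3, pow_succ]
      omega
    omega
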